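/- Suppose h and k are positive differentiable functions with (log h)'(z) ≥ (log k)'(z) for z ∈ [ζ₁, ζ]. Then h(ζ)^{-1} ∫_{ζ₁}^{ζ} h(z) dz ≤ k(ζ)^{-1} ∫_{ζ₁}^{ζ} k(z) dz. -/
import Mathlib


open Real intervalIntegral

theorem growth_comparison
    (h k : ℝ → ℝ) (ζ₁ ζ : ℝ) (hlt : ζ₁ < ζ)
    (hpos : ∀ z, 0 < h z) (kpos : ∀ z, 0 < k z)
    (hdiff : Differentiable ℝ h) (kdiff : Differentiable ℝ k)
    (hlog : ∀ z ∈ Set.Icc ζ₁ ζ,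
      deriv (fun z => Real.log (h z)) z ≥ deriv (fun z => Real.log (k z)) z) :
    (h ζ)⁻¹ * ∫ z in ζ₁..ζ, h z ≤ (k ζ)⁻¹ * ∫ z in ζ₁..ζ, k z := by
  set g : ℝ → ℝ := fun z => Real.log (h z) - Real.log (k z) with hg
  have gdiff : Differentiable ℝ g := fun z =>
    (((hdiff z).log (hpos z).ne')).sub ((kdiff z).log (kpos z).ne')
  have gmono : MonotoneOn g (Set.Icc ζ₁ ζ) := by
    apply monotoneOn_of_deriv_nonneg (convex_Icc _ _) gdiff.continuous.continuousOn
      (gdiff.differentiableOn.mono interior_subset)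
    intro z hz
    rw [interior_Icc] at hz
    have hz' : z ∈ Set.Icc ζ₁ ζ := Set.Ioo_subset_Icc_self hz
    have : deriv g z = deriv (fun z => Real.log (h z)) z - deriv (fun z => Real.log (k z)) z := by
      simp only [hg]
      exact deriv_sub ((hdiff z).log (hpos z).ne') ((kdiff z).log (kpos z).ne')
    rw [this]
    exact sub_nonneg.mpr (hlog z hz')
  have key : ∀ z ∈ Set.Icc ζ₁ ζ, h z ≤ h ζ / k ζ * k z := by
    intro z hz
    have hle : g z ≤ g ζ := gmono hz (Set.right_mem_Icc.mpr hlt.le) hz.2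
    have : Real.log (h z * k ζ) ≤ Real.log (h ζ * k z) := by
      rw [Real.log_mul (hpos z).ne' (kpos ζ).ne', Real.log_mul (hpos ζ).ne' (kpos z).ne']
      simp only [hg] at hle
      linarith
    have h2 : h z * k ζ ≤ h ζ * k z :=
      (Real.log_le_log_iff (mul_pos (hpos z) (kpos ζ)) (mul_pos (hpos ζ) (kpos z))).mp this
    rw [div_mul_eq_mul_div, le_div_iff₀ (kpos ζ)]
    linarith
  have hint : ∫ z in ζ₁..ζ, h z ≤ ∫ z in ζ₁..ζ, h ζ / k ζ * k z := by
    apply intervalIntegral.integral_mono_on hlt.le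
      (hdiff.continuous.intervalIntegrable _ _)
      ((continuous_const.mul kdiff.continuous).intervalIntegrable _ _)
    exact key
  rw [intervalIntegral.integral_const_mul] at hint
  have hk0 : (0:ℝ) < k ζ := kpos ζ
  have hh0 : (0:ℝ) < h ζ := hpos ζ
  calc (h ζ)⁻¹ * ∫ z in ζ₁..ζ, h z
      ≤ (h ζ)⁻¹ * (h ζ / k ζ * ∫ z in ζ₁..ζ, k z) := by
        exact mul_le_mul_of_nonneg_left hint (by positivity)
    _ = (k ζ)⁻¹ * ∫ z in ζ₁..ζ, k z := by
        field_simp
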